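/- The minimum labeled split-tour length is at most the minimum unlabeled split-tour length plus 2nε: min over permutations σ of L(σ) ≤ (min over pairs of permutations (σ, τ) of U(σ, τ)) + 2nε. -/

import Mathlib

/-- The start position of the split pair: `pᵢ` shifted left by `ε/2` along the x-axis
(the plane is modeled by `ℂ`). -/
noncomputable def startPt (q : ℂ) (ε : ℝ) : ℂ := q - (ε : ℂ) / 2

/-- The goal position of the split pair: `pᵢ` shifted right by `ε/2` along the x-axis. -/
noncomputable def goalPt (q : ℂ) (ε : ℝ) : ℂ := q + (ε : ℂ) / 2

/-- The TSP tour length `T(σ)` through `p₀, p_{σ(1)}, …, p_{σ(n)}, p₀`.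
Points `p₁, …, pₙ` are `p i.succ` for `i : Fin n`. -/
noncomputable def tourT (n : ℕ) (hn : 0 < n) (p : Fin (n + 1) → ℂ)
    (σ : Equiv.Perm (Fin n)) : ℝ :=
  dist (p 0) (p (σ ⟨0, hn⟩).succ)
    + ∑ i : Fin (n - 1),
        dist (p (σ ⟨i.1, by have := i.2; omega⟩).succ)
             (p (σ ⟨i.1 + 1, by have := i.2; omega⟩).succ)
    + dist (p (σ ⟨n - 1, by omega⟩).succ) (p 0)

/-- The labeled split-tour length `L(σ)`:
`dist(p₀,s_{σ(1)}) + Σᵢ dist(s_{σ(i)},g_{σ(i)}) + Σᵢ dist(g_{σ(i)},s_{σ(i+1)}) + dist(g_{σ(n)},p₀)`. -/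
noncomputable def tourL (n : ℕ) (hn : 0 < n) (p : Fin (n + 1) → ℂ) (ε : ℝ)
    (σ : Equiv.Perm (Fin n)) : ℝ :=
  dist (p 0) (startPt (p (σ ⟨0, hn⟩).succ) ε)
    + ∑ i : Fin n, dist (startPt (p (σ i).succ) ε) (goalPt (p (σ i).succ) ε)
    + ∑ i : Fin (n - 1),
        dist (goalPt (p (σ ⟨i.1, by have := i.2; omega⟩).succ) ε)
             (startPt (p (σ ⟨i.1 + 1, by have := i.2; omega⟩).succ) ε)
    + dist (goalPt (p (σ ⟨n - 1, by omega⟩).succ) ε) (p 0)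

/-- The unlabeled split-tour length `U(σ, τ)`:
`dist(p₀,s_{σ(1)}) + Σᵢ dist(s_{σ(i)},g_{τ(i)}) + Σᵢ dist(g_{τ(i)},s_{σ(i+1)}) + dist(g_{τ(n)},p₀)`. -/
noncomputable def tourU (n : ℕ) (hn : 0 < n) (p : Fin (n + 1) → ℂ) (ε : ℝ)
    (σ τ : Equiv.Perm (Fin n)) : ℝ :=
  dist (p 0) (startPt (p (σ ⟨0, hn⟩).succ) ε)
    + ∑ i : Fin n, dist (startPt (p (σ i).succ) ε) (goalPt (p (τ i).succ) ε)
    + ∑ i : Fin (n - 1),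
        dist (goalPt (p (τ ⟨i.1, by have := i.2; omega⟩).succ) ε)
             (startPt (p (σ ⟨i.1 + 1, by have := i.2; omega⟩).succ) ε)
    + dist (goalPt (p (τ ⟨n - 1, by omega⟩).succ) ε) (p 0)


lemma dist_start_goal (q : ℂ) {ε : ℝ} (hε : 0 ≤ ε) :
    dist (startPt q ε) (goalPt q ε) = ε := by
  rw [Complex.dist_eq]
  have : startPt q ε - goalPt q ε = (-ε : ℂ) := by
    simp [startPt, goalPt]; ring
  rw [this, norm_neg, Complex.norm_real, Real.norm_eq_abs, abs_of_nonneg hε]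

lemma goal_bound (a b X : ℂ) {ε : ℝ} (hε : 0 ≤ ε) :
    dist (goalPt a ε) X
      ≤ ε + dist (startPt a ε) (goalPt b ε) + dist (goalPt b ε) X := by
  calc dist (goalPt a ε) X
      ≤ dist (goalPt a ε) (startPt a ε) + dist (startPt a ε) (goalPt b ε)
          + dist (goalPt b ε) X := dist_triangle4 _ _ _ _
    _ = ε + dist (startPt a ε) (goalPt b ε) + dist (goalPt b ε) X := by
        rw [dist_comm (goalPt a ε), dist_start_goal a hε]

lemma main_bound (m : ℕ) (p : Fin (m + 1 + 1) → ℂ) (ε : ℝ) (hε : 0 < ε)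
    (σ τ : Equiv.Perm (Fin (m + 1))) :
    tourL (m + 1) (Nat.succ_pos m) p ε σ
      ≤ tourU (m + 1) (Nat.succ_pos m) p ε σ τ + 2 * (m + 1) * ε := by
  have hε' : (0:ℝ) ≤ ε := hε.le
  set s : Fin (m + 1) → ℂ := fun i => startPt (p (σ i).succ) ε with hs
  set g : Fin (m + 1) → ℂ := fun i => goalPt (p (σ i).succ) ε with hg
  set h : Fin (m + 1) → ℂ := fun i => goalPt (p (τ i).succ) ε with hh
  have hB : ∀ i : Fin (m + 1), dist (s i) (g i) = ε :=
    fun i => dist_start_goal _ hε'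
  have key : ∀ (i : Fin (m+1)) (X : ℂ),
      dist (g i) X ≤ ε + dist (s i) (h i) + dist (h i) X :=
    fun i X => goal_bound _ _ _ hε'
  show dist (p 0) (s ⟨0, _⟩) + ∑ i, dist (s i) (g i)
      + ∑ i : Fin m, dist (g ⟨i.1, by omega⟩) (s ⟨i.1 + 1, by omega⟩)
      + dist (g ⟨m, by omega⟩) (p 0)
    ≤ dist (p 0) (s ⟨0, _⟩) + ∑ i, dist (s i) (h i)
      + ∑ i : Fin m, dist (h ⟨i.1, by omega⟩) (s ⟨i.1 + 1, by omega⟩)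
      + dist (h ⟨m, by omega⟩) (p 0) + 2 * (m + 1) * ε
  have e1 : ∑ i, dist (s i) (g i) = (m + 1) * ε := by
    simp [hB, Finset.sum_const, mul_comm]
  have e2 : ∑ i : Fin m, dist (g ⟨i.1, by omega⟩) (s ⟨i.1 + 1, by omega⟩)
      ≤ ∑ i : Fin m, (ε + dist (s ⟨i.1, by omega⟩) (h ⟨i.1, by omega⟩)
          + dist (h ⟨i.1, by omega⟩) (s ⟨i.1 + 1, by omega⟩)) :=
    Finset.sum_le_sum fun i _ => key _ _
  have e3 : dist (g ⟨m, by omega⟩) (p 0)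
      ≤ ε + dist (s ⟨m, by omega⟩) (h ⟨m, by omega⟩) + dist (h ⟨m, by omega⟩) (p 0) :=
    key _ _
  have e4 : (∑ i : Fin m, (ε + dist (s ⟨i.1, by omega⟩) (h ⟨i.1, by omega⟩)
          + dist (h ⟨i.1, by omega⟩) (s ⟨i.1 + 1, by omega⟩)))
      = m * ε + ∑ i : Fin m, dist (s ⟨i.1, by omega⟩) (h ⟨i.1, by omega⟩)
          + ∑ i : Fin m, dist (h ⟨i.1, by omega⟩) (s ⟨i.1 + 1, by omega⟩) := by
    rw [Finset.sum_add_distrib, Finset.sum_add_distrib]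
    simp [mul_comm]
  have e5 : ∑ i : Fin (m+1), dist (s i) (h i)
      = (∑ i : Fin m, dist (s ⟨i.1, by omega⟩) (h ⟨i.1, by omega⟩))
        + dist (s ⟨m, by omega⟩) (h ⟨m, by omega⟩) := by
    rw [Fin.sum_univ_castSucc]
    rfl
  rw [e1, e5]
  have := le_trans e2 (le_of_eq e4)
  linarith

/-- The minimum labeled split-tour length is at most the minimum unlabeled split-tour
length plus 2nε: min_σ L(σ) ≤ (min_{(σ,τ)} U(σ,τ)) + 2nε. -/
theorem stmt_4 (n : ℕ) (hn : 0 < n) (p : Fin (n + 1) → ℂ) (ε : ℝ) (hε : 0 < ε)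
    (Lopt Uopt : ℝ)
    (hL : IsLeast (Set.range (tourL n hn p ε)) Lopt)
    (hU : IsLeast (Set.range fun στ : Equiv.Perm (Fin n) × Equiv.Perm (Fin n) =>
        tourU n hn p ε στ.1 στ.2) Uopt) :
    Lopt ≤ Uopt + 2 * n * ε := by
  obtain ⟨⟨σ, τ⟩, hUeq⟩ := hU.1
  have hLle := hL.2 ⟨σ, rfl⟩
  rw [← hUeq]
  cases n with
  | zero => exact absurd hn (lt_irrefl 0)
  | succ m =>
    have hmb := main_bound m p ε hε σ τ
    have : tourL (m + 1) hn p ε σ ≤ tourU (m + 1) hn p ε σ τ + 2 * (m + 1) * ε := hmb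
    push_cast
    linarith
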